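/- Each Mahalanobis distance is bounded by 1: with V = ∑_{i=1}^n (X_i - X̄)(X_i - X̄)^T invertible, for every i one has 0 ≤ (X_i - X̄)^T V^{-1} (X_i - X̄) ≤ 1. -/
import Mathlib


open Matrix BigOperators Finset

lemma sum_mulVec' {m a b : ℕ} (A : Fin m → Matrix (Fin a) (Fin b) ℝ)
    (x : Fin b → ℝ) : (∑ j, A j) *ᵥ x = ∑ j, A j *ᵥ x := by
  ext i
  simp only [mulVec, dotProduct, Matrix.sum_apply, Finset.sum_mul, Finset.sum_apply]
  rw [Finset.sum_comm]

lemma dotProduct_sum' {q m : ℕ} (w : Fin q → ℝ) (f : Fin m → Fin q → ℝ) :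
    w ⬝ᵥ (∑ j, f j) = ∑ j, w ⬝ᵥ f j := by
  simp only [dotProduct, Finset.sum_apply, Finset.mul_sum]
  rw [Finset.sum_comm]

lemma vecMulVec_mulVec' {a q : ℕ} (u : Fin a → ℝ) (b x : Fin q → ℝ) :
    (vecMulVec u b) *ᵥ x = (b ⬝ᵥ x) • u := by
  ext i
  simp only [vecMulVec_apply, mulVec, dotProduct, Pi.smul_apply, smul_eq_mul,
    Finset.sum_mul]
  exact Finset.sum_congr rfl fun j _ => by ring

theorem mahalanobis_distance_bounds
    (p n : ℕ) (X : Fin n → Fin p → ℝ)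
    (Xbar : Fin p → ℝ) (hXbar : Xbar = (n : ℝ)⁻¹ • ∑ i, X i)
    (V : Matrix (Fin p) (Fin p) ℝ)
    (hV : V = ∑ i, vecMulVec (X i - Xbar) (X i - Xbar))
    (hVinv : IsUnit V) :
    ∀ i : Fin n, 0 ≤ (X i - Xbar) ⬝ᵥ (V⁻¹ *ᵥ (X i - Xbar)) ∧
      (X i - Xbar) ⬝ᵥ (V⁻¹ *ᵥ (X i - Xbar)) ≤ 1 := by
  intro i
  set y : Fin n → Fin p → ℝ := fun j => X j - Xbar with hy
  set w : Fin p → ℝ := V⁻¹ *ᵥ y i with hw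
  set d : ℝ := y i ⬝ᵥ w with hd
  have hVw : V *ᵥ w = y i := by
    rw [hw, mulVec_mulVec,
      Matrix.mul_nonsing_inv V ((Matrix.isUnit_iff_isUnit_det V).mp hVinv), one_mulVec]
  have key : d = ∑ j, (y j ⬝ᵥ w) ^ 2 := by
    have h1 : w ⬝ᵥ (V *ᵥ w) = d := by rw [hVw, dotProduct_comm, hd]
    rw [← h1, hV, sum_mulVec']
    rw [dotProduct_sum']
    refine Finset.sum_congr rfl fun j _ => ?_
    rw [show vecMulVec (X j - Xbar) (X j - Xbar) *ᵥ w = ((X j - Xbar) ⬝ᵥ w) • (X j - Xbar)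
      from vecMulVec_mulVec' _ _ _, dotProduct_smul, smul_eq_mul, dotProduct_comm w]
    ring
  have hd0 : 0 ≤ d := key ▸ Finset.sum_nonneg fun j _ => sq_nonneg _
  have hdsq : d ^ 2 ≤ d := by
    calc d ^ 2 = (y i ⬝ᵥ w) ^ 2 := by rw [hd]
    _ ≤ ∑ j, (y j ⬝ᵥ w) ^ 2 :=
        Finset.single_le_sum (f := fun j => (y j ⬝ᵥ w) ^ 2)
          (fun j _ => sq_nonneg _) (Finset.mem_univ i)
    _ = d := key.symm
  exact ⟨hd0, by nlinarith⟩
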